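/- Let f ∈ σ(N₁,N₂,N₃) with coefficients q(k,ℓ,m) and let p ∈ ℝ[x,y,z] be the polynomial with p(x,y,z) = ∑ q(k,ℓ,m)·(x+i)^{N₁+k}(x−i)^{N₁−k}(y+i)^{N₂+ℓ}(y−i)^{N₂−ℓ}(z+i)^{N₃+m}(z−i)^{N₃−m} for all real x,y,z (the Calderon transform of f). Then f ∈ Q(N₁,N₂,N₃) if and only if p ∈ Q_P(2N₁,2N₂,2N₃). -/

import Mathlib

open Complex ComplexOrder MvPolynomial

noncomputable section

/-- The lattice box `S(N₁,N₂,N₃)`. -/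
def Sbox (N₁ N₂ N₃ : ℕ) : Finset (ℤ × ℤ × ℤ) :=
  Finset.Icc (0, 0, 0) ((N₁ : ℤ), (N₂ : ℤ), (N₃ : ℤ))

/-- The lattice box `Δ(N₁,N₂,N₃)`. -/
def Dbox (N₁ N₂ N₃ : ℕ) : Finset (ℤ × ℤ × ℤ) :=
  Finset.Icc (-(N₁ : ℤ), -(N₂ : ℤ), -(N₃ : ℤ)) ((N₁ : ℤ), (N₂ : ℤ), (N₃ : ℤ))

/-- The character `exp(i(kα + ℓβ + mγ))`. -/
def eChar (δ : ℤ × ℤ × ℤ) (v : ℝ × ℝ × ℝ) : ℂ :=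
  Complex.exp (Complex.I *
    ((δ.1 : ℂ) * (v.1 : ℂ) + (δ.2.1 : ℂ) * (v.2.1 : ℂ) + (δ.2.2 : ℂ) * (v.2.2 : ℂ)))

/-- `σ(N₁,N₂,N₃)`: trig polynomials with frequencies in `Δ(N₁,N₂,N₃)` taking only real
nonnegative values. -/
def sigmaSet (N₁ N₂ N₃ : ℕ) : Set ((ℝ × ℝ × ℝ) → ℂ) :=
  { f | (∃ q : ℤ × ℤ × ℤ → ℂ, f = fun v => ∑ δ ∈ Dbox N₁ N₂ N₃, q δ * eChar δ v) ∧
        ∀ v, 0 ≤ f v }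

/-- `Q(N₁,N₂,N₃)`: finite sums of squared moduli of trig polynomials with frequencies in `S`. -/
def QSet (N₁ N₂ N₃ : ℕ) : Set ((ℝ × ℝ × ℝ) → ℂ) :=
  { f | ∃ (r : ℕ) (q : Fin r → (ℤ × ℤ × ℤ) → ℂ),
      f = fun v => ∑ j, (‖∑ p ∈ Sbox N₁ N₂ N₃, q j p * eChar p v‖ : ℂ) ^ 2 }

/-- `Q_P(2N₁,2N₂,2N₃)`: real polynomials expressible as finite sums `∑ gⱼ²` with each `gⱼ` of
degree at most `Nᵢ` in the `i`-th variable. -/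
def QPSet (N₁ N₂ N₃ : ℕ) : Set (MvPolynomial (Fin 3) ℝ) :=
  { p | ∃ (r : ℕ) (g : Fin r → MvPolynomial (Fin 3) ℝ),
      (∀ j, (g j).degreeOf 0 ≤ N₁ ∧ (g j).degreeOf 1 ≤ N₂ ∧ (g j).degreeOf 2 ≤ N₃) ∧
      p = ∑ j, (g j) ^ 2 }

/-- The summand `(x+i)^{N₁+k}(x−i)^{N₁−k}(y+i)^{N₂+ℓ}(y−i)^{N₂−ℓ}(z+i)^{N₃+m}(z−i)^{N₃−m}` of
the Calderon transform. -/
def calderonTerm (N₁ N₂ N₃ : ℕ) (δ : ℤ × ℤ × ℤ) (x y z : ℝ) : ℂ :=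
  ((x : ℂ) + Complex.I) ^ (((N₁ : ℤ) + δ.1).toNat) * ((x : ℂ) - Complex.I) ^ (((N₁ : ℤ) - δ.1).toNat) *
  ((y : ℂ) + Complex.I) ^ (((N₂ : ℤ) + δ.2.1).toNat) * ((y : ℂ) - Complex.I) ^ (((N₂ : ℤ) - δ.2.1).toNat) *
  ((z : ℂ) + Complex.I) ^ (((N₃ : ℤ) + δ.2.2).toNat) * ((z : ℂ) - Complex.I) ^ (((N₃ : ℤ) - δ.2.2).toNat)

namespace CalderonAux

lemma xmI_ne (x : ℝ) : ((x:ℂ) - Complex.I) ≠ 0 := by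
  intro h
  have := congrArg Complex.im h
  simp at this

lemma mul_xpI_xmI (x : ℝ) : ((x:ℂ)+I) * ((x:ℂ)-I) = (((x^2+1 : ℝ)) : ℂ) := by
  have : (I:ℂ)*I = -1 := Complex.I_mul_I
  push_cast
  linear_combination -this

lemma w_ne_zero {x : ℝ} {w : ℂ} (hw : ((x:ℂ)+I) = w * ((x:ℂ)-I)) : w ≠ 0 := by
  intro h
  rw [h, zero_mul] at hw
  have := congrArg Complex.im hw
  simp at this

lemma keyA {N : ℕ} {k : ℤ} (hk1 : -(N:ℤ) ≤ k) (hk2 : k ≤ N) (x : ℝ) {w : ℂ}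
    (hw : ((x:ℂ)+I) = w * ((x:ℂ)-I)) :
    ((x:ℂ)+I) ^ (((N:ℤ)+k).toNat) * ((x:ℂ)-I) ^ (((N:ℤ)-k).toNat)
      = (((x^2+1:ℝ)):ℂ)^N * w ^ k := by
  have hv : ((x:ℂ)-I) ≠ 0 := xmI_ne x
  have hw0 : w ≠ 0 := w_ne_zero hw
  have h1 : (0:ℤ) ≤ (N:ℤ)+k := by linarith
  have h2 : (0:ℤ) ≤ (N:ℤ)-k := by linarith
  have e1 : ((x:ℂ)+I) ^ (((N:ℤ)+k).toNat) = ((x:ℂ)+I) ^ ((N:ℤ)+k) := by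
    rw [← zpow_natCast, Int.toNat_of_nonneg h1]
  have e2 : ((x:ℂ)-I) ^ (((N:ℤ)-k).toNat) = ((x:ℂ)-I) ^ ((N:ℤ)-k) := by
    rw [← zpow_natCast, Int.toNat_of_nonneg h2]
  have A : (((x^2+1:ℝ)):ℂ) = w * ((x:ℂ)-I)^2 := by
    rw [← mul_xpI_xmI x, hw]; ring
  rw [e1, e2, hw, A, mul_zpow, mul_pow]
  have B : ((x:ℂ)-I)^((N:ℤ)+k) * ((x:ℂ)-I)^((N:ℤ)-k) = (((x:ℂ)-I)^2)^N := by
    rw [← zpow_add₀ hv]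
    have : (N:ℤ)+k+((N:ℤ)-k) = ((2*N : ℕ):ℤ) := by push_cast; ring
    rw [this, zpow_natCast, pow_mul]
  have C : w^((N:ℤ)+k) = w^N * w^k := by
    rw [zpow_add₀ hw0, zpow_natCast]
  calc w^((N:ℤ)+k) * ((x:ℂ)-I)^((N:ℤ)+k) * ((x:ℂ)-I)^((N:ℤ)-k)
      = w^((N:ℤ)+k) * ((((x:ℂ)-I)^2)^N) := by rw [mul_assoc, B]
    _ = w^N * (((x:ℂ)-I)^2)^N * w^k := by rw [C]; ring

lemma keyB {N : ℕ} {k : ℤ} (hk1 : 0 ≤ k) (hk2 : k ≤ N) (x : ℝ) {w : ℂ}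
    (hw : ((x:ℂ)+I) = w * ((x:ℂ)-I)) :
    ((x:ℂ)+I) ^ k.toNat * ((x:ℂ)-I) ^ (N - k.toNat)
      = ((x:ℂ)-I)^N * w ^ k := by
  have hv : ((x:ℂ)-I) ≠ 0 := xmI_ne x
  have hkN : k.toNat ≤ N := by omega
  have e1 : w ^ k = w ^ k.toNat := by
    rw [← zpow_natCast, Int.toNat_of_nonneg hk1]
  rw [hw, mul_pow, e1, mul_assoc, ← pow_add]
  have : k.toNat + (N - k.toNat) = N := by omega
  rw [this]; ring

lemma keyC {N a : ℕ} (ha : a ≤ N) {w : ℂ} (hw1 : w - 1 ≠ 0) (x : ℝ)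
    (hx : ((x:ℂ)) * (w - 1) = I * (w+1)) :
    (I^a / (2*I)^N) * ((w+1)^a * (w-1)^(N-a)) * (((x:ℂ))-I)^N = ((x:ℂ))^a := by
  have h2I : ((2:ℂ)*I) ≠ 0 := by simp [Complex.I_ne_zero]
  have hxI : (((x:ℂ))-I) * (w-1) = 2*I := by linear_combination hx
  have hpow : (((x:ℂ))-I)^N * (w-1)^N = (2*I)^N := by
    rw [← mul_pow, hxI]
  have hxa : ((x:ℂ))^a * (w-1)^a = I^a * (w+1)^a := by
    rw [← mul_pow, ← mul_pow, hx]
  have hwne : (w-1)^N ≠ 0 := pow_ne_zero _ hw1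
  apply mul_right_cancel₀ hwne
  have hsplit : (w-1)^N = (w-1)^a * (w-1)^(N-a) := by
    rw [← pow_add]; congr 1; omega
  calc (I^a / (2*I)^N) * ((w+1)^a * (w-1)^(N-a)) * (((x:ℂ))-I)^N * (w-1)^N
      = (I^a * (w+1)^a * (w-1)^(N-a)) * ((((x:ℂ))-I)^N * (w-1)^N) / (2*I)^N := by ring
    _ = (I^a * (w+1)^a * (w-1)^(N-a)) := by
        rw [hpow, mul_div_assoc, div_self (pow_ne_zero _ h2I), mul_one]
    _ = ((x:ℂ))^a * (w-1)^a * (w-1)^(N-a) := by rw [hxa]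
    _ = ((x:ℂ))^a * (w-1)^N := by rw [hsplit]; ring


lemma exists_w (x : ℝ) : ∃ α : ℝ, ((x:ℂ)+I) = Complex.exp (I*α) * ((x:ℂ)-I) := by
  have hv := xmI_ne x
  set w := ((x:ℂ)+I)/((x:ℂ)-I) with hwdef
  have habs : ‖w‖ = 1 := by
    rw [hwdef, norm_div]
    rw [div_eq_one_iff_eq (norm_ne_zero_iff.mpr hv)]
    rw [Complex.norm_def, Complex.norm_def]
    congr 1
    simp [Complex.normSq_apply]
  refine ⟨w.arg, ?_⟩
  have h := Complex.norm_mul_exp_arg_mul_I w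
  rw [habs] at h
  simp only [Complex.ofReal_one, one_mul] at h
  rw [mul_comm I ((w.arg : ℝ):ℂ), h, hwdef, div_mul_cancel₀ _ hv]

lemma exists_x {w : ℂ} (habs : ‖w‖ = 1) (hw1 : w ≠ 1) :
    ∃ x : ℝ, ((x:ℂ)) * (w - 1) = I * (w+1) := by
  have hw0 : w ≠ 0 := by
    intro h; rw [h] at habs; simp at habs
  have hwm1 : w - 1 ≠ 0 := sub_ne_zero.2 hw1
  have hconj : (starRingEnd ℂ) w = w⁻¹ := Complex.inv_eq_conj habs |>.symm
  have hwinv1 : w⁻¹ - 1 ≠ 0 := by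
    rw [sub_ne_zero]
    exact fun h => hw1 (by rw [← inv_inv w, h, inv_one])
  set ξ := I*(w+1)/(w-1) with hξdef
  have hcj : (starRingEnd ℂ) ξ = ξ := by
    rw [hξdef, map_div₀, map_mul, map_add, map_sub, Complex.conj_I, map_one, hconj]
    rw [div_eq_div_iff hwinv1 hwm1]
    field_simp
    ring
  obtain ⟨x, hx⟩ : ∃ x : ℝ, (x:ℂ) = ξ := ⟨ξ.re, Complex.conj_eq_iff_re.mp hcj⟩
  exact ⟨x, by rw [hx, hξdef, div_mul_cancel₀ _ hwm1]⟩

lemma hw_of_hx {w : ℂ} {x : ℝ} (hw1 : w - 1 ≠ 0)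
    (hx : ((x:ℂ)) * (w - 1) = I * (w+1)) :
    ((x:ℂ)+I) = w * ((x:ℂ)-I) := by
  apply mul_right_cancel₀ hw1
  linear_combination (1-w) * hx

lemma eChar_eq (δ : ℤ × ℤ × ℤ) (v : ℝ × ℝ × ℝ) :
    eChar δ v = Complex.exp (I*(v.1:ℂ)) ^ δ.1 * Complex.exp (I*(v.2.1:ℂ)) ^ δ.2.1
      * Complex.exp (I*(v.2.2:ℂ)) ^ δ.2.2 := by
  have h : I * ((δ.1 : ℂ) * (v.1 : ℂ) + (δ.2.1 : ℂ) * (v.2.1 : ℂ) + (δ.2.2 : ℂ) * (v.2.2 : ℂ))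
      = (δ.1:ℂ) * (I*(v.1:ℂ)) + ((δ.2.1:ℂ) * (I*(v.2.1:ℂ)) + (δ.2.2:ℂ) * (I*(v.2.2:ℂ))) := by
    ring
  rw [eChar, h, Complex.exp_add, Complex.exp_add, Complex.exp_int_mul,
    Complex.exp_int_mul, Complex.exp_int_mul, mul_assoc]

lemma mem_Dbox {N₁ N₂ N₃ : ℕ} {δ : ℤ×ℤ×ℤ} (h : δ ∈ Dbox N₁ N₂ N₃) :
    (-(N₁:ℤ) ≤ δ.1 ∧ δ.1 ≤ N₁) ∧ (-(N₂:ℤ) ≤ δ.2.1 ∧ δ.2.1 ≤ N₂) ∧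
      (-(N₃:ℤ) ≤ δ.2.2 ∧ δ.2.2 ≤ N₃) := by
  simp only [Dbox, Finset.mem_Icc, Prod.le_def] at h
  tauto

lemma mem_Sbox {N₁ N₂ N₃ : ℕ} {δ : ℤ×ℤ×ℤ} (h : δ ∈ Sbox N₁ N₂ N₃) :
    (0 ≤ δ.1 ∧ δ.1 ≤ N₁) ∧ (0 ≤ δ.2.1 ∧ δ.2.1 ≤ N₂) ∧ (0 ≤ δ.2.2 ∧ δ.2.2 ≤ N₃) := by
  simp only [Sbox, Finset.mem_Icc, Prod.le_def] at h
  tauto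

lemma calderonTerm_eq {N₁ N₂ N₃ : ℕ} {δ : ℤ×ℤ×ℤ} (hδ : δ ∈ Dbox N₁ N₂ N₃)
    (x y z : ℝ) {w₁ w₂ w₃ : ℂ}
    (h1 : ((x:ℂ)+I) = w₁ * ((x:ℂ)-I)) (h2 : ((y:ℂ)+I) = w₂ * ((y:ℂ)-I))
    (h3 : ((z:ℂ)+I) = w₃ * ((z:ℂ)-I)) :
    calderonTerm N₁ N₂ N₃ δ x y z
      = ((x^2+1:ℝ):ℂ)^N₁ * ((y^2+1:ℝ):ℂ)^N₂ * ((z^2+1:ℝ):ℂ)^N₃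
        * (w₁ ^ δ.1 * w₂ ^ δ.2.1 * w₃ ^ δ.2.2) := by
  obtain ⟨⟨a1, a2⟩, ⟨b1, b2⟩, ⟨c1, c2⟩⟩ := mem_Dbox hδ
  unfold calderonTerm
  calc ((x : ℂ) + Complex.I) ^ (((N₁ : ℤ) + δ.1).toNat) * ((x : ℂ) - Complex.I) ^ (((N₁ : ℤ) - δ.1).toNat) *
      ((y : ℂ) + Complex.I) ^ (((N₂ : ℤ) + δ.2.1).toNat) * ((y : ℂ) - Complex.I) ^ (((N₂ : ℤ) - δ.2.1).toNat) *
      ((z : ℂ) + Complex.I) ^ (((N₃ : ℤ) + δ.2.2).toNat) * ((z : ℂ) - Complex.I) ^ (((N₃ : ℤ) - δ.2.2).toNat)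
      = (((x : ℂ) + Complex.I) ^ (((N₁ : ℤ) + δ.1).toNat) * ((x : ℂ) - Complex.I) ^ (((N₁ : ℤ) - δ.1).toNat)) *
        ((((y : ℂ) + Complex.I) ^ (((N₂ : ℤ) + δ.2.1).toNat) * ((y : ℂ) - Complex.I) ^ (((N₂ : ℤ) - δ.2.1).toNat)) *
        (((z : ℂ) + Complex.I) ^ (((N₃ : ℤ) + δ.2.2).toNat) * ((z : ℂ) - Complex.I) ^ (((N₃ : ℤ) - δ.2.2).toNat))) := by
          ring
    _ = _ := by
          rw [keyA a1 a2 x h1, keyA b1 b2 y h2, keyA c1 c2 z h3]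
          ring

lemma degreeOf_linC (n i : Fin 3) (c : ℂ) :
    degreeOf n ((X i + C c : MvPolynomial (Fin 3) ℂ)) ≤ if n = i then 1 else 0 := by
  refine le_trans (degreeOf_add_le _ _ _) ?_
  simp [degreeOf_X, degreeOf_C]

lemma degreeOf_linC' (n i : Fin 3) (c : ℂ) :
    degreeOf n ((X i - C c : MvPolynomial (Fin 3) ℂ)) ≤ if n = i then 1 else 0 := by
  rw [sub_eq_add_neg, ← C_neg]
  exact degreeOf_linC n i (-c)

lemma degreeOf_cpt (n i : Fin 3) (c : ℂ) (a b : ℕ) :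
    degreeOf n (((X i + C c)^a * (X i - C c)^b : MvPolynomial (Fin 3) ℂ))
      ≤ if n = i then a + b else 0 := by
  refine le_trans (degreeOf_mul_le _ _ _) ?_
  have h1 := le_trans (degreeOf_pow_le n (X i + C c) a)
    (Nat.mul_le_mul_left a (degreeOf_linC n i c))
  have h2 := le_trans (degreeOf_pow_le n (X i - C c) b)
    (Nat.mul_le_mul_left b (degreeOf_linC' n i c))
  by_cases h : n = i <;> simp [h] at h1 h2 ⊢ <;> omega

/-- real part of a complex `MvPolynomial`. -/
def reP (g : MvPolynomial (Fin 3) ℂ) : MvPolynomial (Fin 3) ℝ :=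
  AddMonoidAlgebra.ofCoeff (Finsupp.mapRange Complex.re Complex.zero_re (AddMonoidAlgebra.coeff g))

/-- imaginary part of a complex `MvPolynomial`. -/
def imP (g : MvPolynomial (Fin 3) ℂ) : MvPolynomial (Fin 3) ℝ :=
  AddMonoidAlgebra.ofCoeff (Finsupp.mapRange Complex.im Complex.zero_im (AddMonoidAlgebra.coeff g))

lemma coeff_reP (g : MvPolynomial (Fin 3) ℂ) (m : Fin 3 →₀ ℕ) :
    coeff m (reP g) = (coeff m g).re := rfl

lemma coeff_imP (g : MvPolynomial (Fin 3) ℂ) (m : Fin 3 →₀ ℕ) :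
    coeff m (imP g) = (coeff m g).im := rfl

lemma support_reP (g : MvPolynomial (Fin 3) ℂ) : (reP g).support ⊆ g.support :=
  show (Finsupp.mapRange Complex.re Complex.zero_re (AddMonoidAlgebra.coeff g)).support ⊆
    (AddMonoidAlgebra.coeff g).support from Finsupp.support_mapRange

lemma support_imP (g : MvPolynomial (Fin 3) ℂ) : (imP g).support ⊆ g.support :=
  show (Finsupp.mapRange Complex.im Complex.zero_im (AddMonoidAlgebra.coeff g)).support ⊆
    (AddMonoidAlgebra.coeff g).support from Finsupp.support_mapRange

lemma degreeOf_reP_le (n : Fin 3) (g : MvPolynomial (Fin 3) ℂ) :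
    degreeOf n (reP g) ≤ degreeOf n g := by
  rw [degreeOf_eq_sup, degreeOf_eq_sup]
  exact Finset.sup_mono (support_reP g)

lemma degreeOf_imP_le (n : Fin 3) (g : MvPolynomial (Fin 3) ℂ) :
    degreeOf n (imP g) ≤ degreeOf n g := by
  rw [degreeOf_eq_sup, degreeOf_eq_sup]
  exact Finset.sup_mono (support_imP g)

lemma eval_reP (x : Fin 3 → ℝ) (g : MvPolynomial (Fin 3) ℂ) :
    eval x (reP g) = (eval (fun i => ((x i : ℝ):ℂ)) g).re := by
  rw [eval_eq', eval_eq']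
  rw [Finset.sum_subset (support_reP g) (fun m _ hm => by
    rw [MvPolynomial.notMem_support_iff.mp hm, zero_mul])]
  rw [Complex.re_sum]
  refine Finset.sum_congr rfl fun m _ => ?_
  have hprod : (∏ i, ((x i : ℝ):ℂ)^(m i)) = ((∏ i, x i ^ m i : ℝ) : ℂ) := by
    push_cast; rfl
  rw [coeff_reP, hprod, Complex.mul_re, Complex.ofReal_re, Complex.ofReal_im]
  ring

lemma eval_imP (x : Fin 3 → ℝ) (g : MvPolynomial (Fin 3) ℂ) :
    eval x (imP g) = (eval (fun i => ((x i : ℝ):ℂ)) g).im := by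
  rw [eval_eq', eval_eq']
  rw [Finset.sum_subset (support_imP g) (fun m _ hm => by
    rw [MvPolynomial.notMem_support_iff.mp hm, zero_mul])]
  rw [Complex.im_sum]
  refine Finset.sum_congr rfl fun m _ => ?_
  have hprod : (∏ i, ((x i : ℝ):ℂ)^(m i)) = ((∏ i, x i ^ m i : ℝ) : ℂ) := by
    push_cast; rfl
  rw [coeff_imP, hprod, Complex.mul_im, Complex.ofReal_re, Complex.ofReal_im]
  ring

lemma dense_good : Dense {v : ℝ × ℝ × ℝ | Complex.exp (I*(v.1:ℂ)) ≠ 1 ∧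
    Complex.exp (I*(v.2.1:ℂ)) ≠ 1 ∧ Complex.exp (I*(v.2.2:ℂ)) ≠ 1} := by
  have hS : {α : ℝ | Complex.exp (I*(α:ℂ)) = 1} = Set.range (fun n : ℤ => 2*Real.pi*n) := by
    ext α
    simp only [Set.mem_setOf_eq, Complex.exp_eq_one_iff, Set.mem_range]
    constructor
    · rintro ⟨n, hn⟩
      refine ⟨n, ?_⟩
      have hc : ((2*Real.pi*(n:ℝ)) : ℂ) = ((α : ℝ) : ℂ) := by
        apply mul_left_cancel₀ Complex.I_ne_zero
        rw [hn]; push_cast; ring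
      exact_mod_cast hc
    · rintro ⟨n, hn⟩
      exact ⟨n, by rw [← hn]; push_cast; ring⟩
  have hd : Dense {α : ℝ | Complex.exp (I*(α:ℂ)) ≠ 1} := by
    have : {α : ℝ | Complex.exp (I*(α:ℂ)) ≠ 1}
        = (Set.range (fun n : ℤ => 2*Real.pi*n))ᶜ := by
      rw [← hS]; rfl
    rw [this]
    exact (Set.countable_range _).dense_compl ℝ
  have h3 := hd.prod (hd.prod hd)
  have hset : {v : ℝ × ℝ × ℝ | Complex.exp (I*(v.1:ℂ)) ≠ 1 ∧
      Complex.exp (I*(v.2.1:ℂ)) ≠ 1 ∧ Complex.exp (I*(v.2.2:ℂ)) ≠ 1}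
      = {α : ℝ | Complex.exp (I*(α:ℂ)) ≠ 1} ×ˢ
        ({α : ℝ | Complex.exp (I*(α:ℂ)) ≠ 1} ×ˢ {α : ℝ | Complex.exp (I*(α:ℂ)) ≠ 1}) := by
    ext v
    simp [Set.mem_prod]
  rw [hset]
  exact h3

lemma continuous_eChar (δ : ℤ×ℤ×ℤ) : Continuous (eChar δ) := by
  unfold eChar
  fun_prop

lemma continuous_trig (q : (ℤ×ℤ×ℤ) → ℂ) (s : Finset (ℤ×ℤ×ℤ)) :
    Continuous (fun v : ℝ×ℝ×ℝ => ∑ δ ∈ s, q δ * eChar δ v) := by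
  refine continuous_finset_sum _ fun δ _ => ?_
  exact continuous_const.mul (continuous_eChar δ)

lemma normSq_xmI (x : ℝ) : Complex.normSq ((x:ℂ) - I) = x^2 + 1 := by
  simp [Complex.normSq_apply]
  ring

/-- The polynomial `G` attached to coefficients `a` on the box `S`. -/
def Gp (N₁ N₂ N₃ : ℕ) (a : (ℤ×ℤ×ℤ) → ℂ) : MvPolynomial (Fin 3) ℂ :=
  ∑ δ ∈ Sbox N₁ N₂ N₃, C (a δ) *
    (((X 0 + C Complex.I)^(δ.1.toNat) * (X 0 - C Complex.I)^(N₁ - δ.1.toNat)) *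
    (((X 1 + C Complex.I)^(δ.2.1.toNat) * (X 1 - C Complex.I)^(N₂ - δ.2.1.toNat)) *
    ((X 2 + C Complex.I)^(δ.2.2.toNat) * (X 2 - C Complex.I)^(N₃ - δ.2.2.toNat))))

lemma degreeOf_term_le {N₁ N₂ N₃ : ℕ} (n : Fin 3) (c c' : ℂ) {a1 a2 a3 : ℕ}
    (h1 : a1 ≤ N₁) (h2 : a2 ≤ N₂) (h3 : a3 ≤ N₃) :
    degreeOf n (C c' *
      (((X 0 + C c)^a1 * (X 0 - C c)^(N₁ - a1)) *
      (((X 1 + C c)^a2 * (X 1 - C c)^(N₂ - a2)) *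
      ((X 2 + C c)^a3 * (X 2 - C c)^(N₃ - a3)))) : MvPolynomial (Fin 3) ℂ)
      ≤ ![N₁, N₂, N₃] n := by
  refine le_trans (degreeOf_mul_le _ _ _) ?_
  rw [degreeOf_C]
  refine le_trans (add_le_add_right (degreeOf_mul_le _ _ _) 0) ?_
  refine le_trans (add_le_add_right (add_le_add (degreeOf_cpt n 0 c a1 (N₁ - a1))
    (le_trans (degreeOf_mul_le _ _ _) (add_le_add (degreeOf_cpt n 1 c a2 (N₂ - a2))
      (degreeOf_cpt n 2 c a3 (N₃ - a3))))) 0) ?_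
  fin_cases n <;> simp <;> omega

lemma degreeOf_Gp (N₁ N₂ N₃ : ℕ) (a : (ℤ×ℤ×ℤ) → ℂ) (n : Fin 3) :
    degreeOf n (Gp N₁ N₂ N₃ a) ≤ ![N₁, N₂, N₃] n := by
  refine le_trans (degreeOf_sum_le _ _ _) (Finset.sup_le fun δ hδ => ?_)
  obtain ⟨⟨p1, p2⟩, ⟨p3, p4⟩, ⟨p5, p6⟩⟩ := mem_Sbox hδ
  exact degreeOf_term_le n Complex.I (a δ) (by omega) (by omega) (by omega)

lemma eval_Gp (N₁ N₂ N₃ : ℕ) (a : (ℤ×ℤ×ℤ) → ℂ) (x y z : ℝ) (α β γ : ℝ)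
    (e1 : ((x:ℂ)+I) = Complex.exp (I*(α:ℂ)) * ((x:ℂ)-I))
    (e2 : ((y:ℂ)+I) = Complex.exp (I*(β:ℂ)) * ((y:ℂ)-I))
    (e3 : ((z:ℂ)+I) = Complex.exp (I*(γ:ℂ)) * ((z:ℂ)-I)) :
    eval (fun i => ((![x,y,z] i : ℝ) : ℂ)) (Gp N₁ N₂ N₃ a)
      = ((x:ℂ)-I)^N₁ * ((y:ℂ)-I)^N₂ * ((z:ℂ)-I)^N₃ *
        ∑ δ ∈ Sbox N₁ N₂ N₃, a δ * eChar δ (α, β, γ) := by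
  unfold Gp
  rw [map_sum, Finset.mul_sum]
  refine Finset.sum_congr rfl fun δ hδ => ?_
  obtain ⟨⟨p1, p2⟩, ⟨p3, p4⟩, ⟨p5, p6⟩⟩ := mem_Sbox hδ
  simp only [eval_mul, eval_pow, eval_add, eval_sub, eval_X, eval_C,
    Matrix.cons_val_zero, Matrix.cons_val_one, Matrix.head_cons, Matrix.cons_val_two,
    Matrix.tail_cons]
  rw [keyB p1 p2 x e1, keyB p3 p4 y e2, keyB p5 p6 z e3, eChar_eq]
  ring

/-- Monomial attached to a lattice point. -/
def toMono (δ : ℤ×ℤ×ℤ) : Fin 3 →₀ ℕ :=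
  Finsupp.equivFunOnFinite.symm ![δ.1.toNat, δ.2.1.toNat, δ.2.2.toNat]

lemma toMono_apply (δ : ℤ×ℤ×ℤ) (i : Fin 3) :
    toMono δ i = ![δ.1.toNat, δ.2.1.toNat, δ.2.2.toNat] i := rfl

/-- A polynomial with per-variable degrees at most `N₁,N₂,N₃`, evaluated at
`(e^{iα}, e^{iβ}, e^{iγ})`, is the trig polynomial with coefficients given by
its coefficients. -/
lemma sum_coeff_eChar (N₁ N₂ N₃ : ℕ) (H : MvPolynomial (Fin 3) ℂ)
    (hd : ∀ n : Fin 3, degreeOf n H ≤ ![N₁, N₂, N₃] n) (v : ℝ × ℝ × ℝ) :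
    ∑ δ ∈ Sbox N₁ N₂ N₃, coeff (toMono δ) H * eChar δ v
      = eval ![Complex.exp (I*(v.1:ℂ)), Complex.exp (I*(v.2.1:ℂ)),
          Complex.exp (I*(v.2.2:ℂ))] H := by
  classical
  rw [eval_eq']
  have hinj : Set.InjOn toMono (Sbox N₁ N₂ N₃ : Set (ℤ×ℤ×ℤ)) := by
    intro δ hδ δ' hδ' h
    obtain ⟨⟨p1, _⟩, ⟨p3, _⟩, ⟨p5, _⟩⟩ := mem_Sbox hδ
    obtain ⟨⟨q1, _⟩, ⟨q3, _⟩, ⟨q5, _⟩⟩ := mem_Sbox hδ'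
    have h0 := congrArg (fun m => m 0) h
    have h1 := congrArg (fun m => m 1) h
    have h2 := congrArg (fun m => m 2) h
    simp only [toMono_apply] at h0 h1 h2
    simp only [Matrix.cons_val_zero, Matrix.cons_val_one, Matrix.head_cons,
      Matrix.cons_val_two, Matrix.tail_cons] at h0 h1 h2
    rcases δ with ⟨k, l, m⟩; rcases δ' with ⟨k', l', m'⟩
    simp only [Prod.fst, Prod.snd] at h0 h1 h2 p1 p3 p5 q1 q3 q5 ⊢
    refine Prod.ext (by simp; omega) (Prod.ext (by simp; omega) (by simp; omega))
  have hterm : ∀ δ ∈ Sbox N₁ N₂ N₃,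
      coeff (toMono δ) H * eChar δ v
        = coeff (toMono δ) H * ∏ i, ![Complex.exp (I*(v.1:ℂ)), Complex.exp (I*(v.2.1:ℂ)),
            Complex.exp (I*(v.2.2:ℂ))] i ^ (toMono δ i) := by
    intro δ hδ
    obtain ⟨⟨p1, _⟩, ⟨p3, _⟩, ⟨p5, _⟩⟩ := mem_Sbox hδ
    congr 1
    rw [eChar_eq, Fin.prod_univ_three]
    simp only [toMono_apply, Matrix.cons_val_zero, Matrix.cons_val_one, Matrix.head_cons,
      Matrix.cons_val_two, Matrix.tail_cons]
    rw [← zpow_natCast (Complex.exp (I*(v.1:ℂ))), ← zpow_natCast (Complex.exp (I*(v.2.1:ℂ))),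
      ← zpow_natCast (Complex.exp (I*(v.2.2:ℂ))), Int.toNat_of_nonneg p1,
      Int.toNat_of_nonneg p3, Int.toNat_of_nonneg p5]
  rw [Finset.sum_congr rfl hterm]
  have himg := Finset.sum_image (s := Sbox N₁ N₂ N₃) (g := toMono)
    (f := fun m => coeff m H * ∏ i, ![Complex.exp (I*(v.1:ℂ)), Complex.exp (I*(v.2.1:ℂ)),
      Complex.exp (I*(v.2.2:ℂ))] i ^ m i)
    (fun δ hδ δ' hδ' h => hinj hδ hδ' h)
  have hsub : H.support ⊆ (Sbox N₁ N₂ N₃).image toMono := by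
    intro m hm
    have hb : ∀ n : Fin 3, m n ≤ ![N₁, N₂, N₃] n :=
      fun n => (degreeOf_le_iff.mp (hd n)) m hm
    refine Finset.mem_image.mpr ⟨((m 0 : ℤ), (m 1 : ℤ), (m 2 : ℤ)), ?_, ?_⟩
    · have h0 := hb 0; have h1 := hb 1; have h2 := hb 2
      simp only [Matrix.cons_val_zero, Matrix.cons_val_one, Matrix.head_cons,
        Matrix.cons_val_two, Matrix.tail_cons] at h0 h1 h2
      simp only [Sbox, Finset.mem_Icc, Prod.le_def]
      refine ⟨⟨by positivity, by positivity, by positivity⟩, ?_⟩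
      exact ⟨by exact_mod_cast h0, by exact_mod_cast h1, by exact_mod_cast h2⟩
    · ext i
      rw [toMono_apply]
      fin_cases i <;> simp
  have hzero : ∀ m ∈ (Sbox N₁ N₂ N₃).image toMono, m ∉ H.support →
      coeff m H * ∏ i, ![Complex.exp (I*(v.1:ℂ)), Complex.exp (I*(v.2.1:ℂ)),
        Complex.exp (I*(v.2.2:ℂ))] i ^ m i = 0 := by
    intro m _ hm
    rw [MvPolynomial.notMem_support_iff.mp hm, zero_mul]
  exact himg.symm.trans (Finset.sum_subset hsub hzero).symm

/-- The complex polynomial (in `w`-variables) attached to a real polynomial `g`. -/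
def Hp (N₁ N₂ N₃ : ℕ) (g : MvPolynomial (Fin 3) ℝ) : MvPolynomial (Fin 3) ℂ :=
  ∑ m ∈ g.support, C (((coeff m g : ℝ) : ℂ) * (Complex.I^(m 0) / (2*Complex.I)^N₁)
      * (Complex.I^(m 1) / (2*Complex.I)^N₂) * (Complex.I^(m 2) / (2*Complex.I)^N₃)) *
    (((X 0 + C 1)^(m 0) * (X 0 - C 1)^(N₁ - m 0)) *
    (((X 1 + C 1)^(m 1) * (X 1 - C 1)^(N₂ - m 1)) *
    ((X 2 + C 1)^(m 2) * (X 2 - C 1)^(N₃ - m 2))))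

lemma degreeOf_Hp (N₁ N₂ N₃ : ℕ) (g : MvPolynomial (Fin 3) ℝ)
    (hg : ∀ n : Fin 3, degreeOf n g ≤ ![N₁, N₂, N₃] n) (n : Fin 3) :
    degreeOf n (Hp N₁ N₂ N₃ g) ≤ ![N₁, N₂, N₃] n := by
  refine le_trans (degreeOf_sum_le _ _ _) (Finset.sup_le fun m hm => ?_)
  have h0 := (degreeOf_le_iff.mp (hg 0)) m hm
  have h1 := (degreeOf_le_iff.mp (hg 1)) m hm
  have h2 := (degreeOf_le_iff.mp (hg 2)) m hm
  simp only [Matrix.cons_val_zero, Matrix.cons_val_one, Matrix.head_cons,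
    Matrix.cons_val_two, Matrix.tail_cons] at h0 h1 h2
  exact degreeOf_term_le n 1 _ h0 h1 h2

lemma eval_Hp (N₁ N₂ N₃ : ℕ) (g : MvPolynomial (Fin 3) ℝ)
    (hg : ∀ n : Fin 3, degreeOf n g ≤ ![N₁, N₂, N₃] n)
    {w₁ w₂ w₃ : ℂ} (hw1 : w₁ - 1 ≠ 0) (hw2 : w₂ - 1 ≠ 0) (hw3 : w₃ - 1 ≠ 0)
    (x y z : ℝ)
    (hx : ((x:ℂ)) * (w₁-1) = I*(w₁+1)) (hy : ((y:ℂ)) * (w₂-1) = I*(w₂+1))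
    (hz : ((z:ℂ)) * (w₃-1) = I*(w₃+1)) :
    eval ![w₁, w₂, w₃] (Hp N₁ N₂ N₃ g) * (((x:ℂ)-I)^N₁ * ((y:ℂ)-I)^N₂ * ((z:ℂ)-I)^N₃)
      = ((eval ![x,y,z] g : ℝ) : ℂ) := by
  rw [eval_eq' (![x,y,z]) g]
  push_cast
  unfold Hp
  rw [map_sum, Finset.sum_mul]
  refine Finset.sum_congr rfl fun m hm => ?_
  have h0 := (degreeOf_le_iff.mp (hg 0)) m hm
  have h1 := (degreeOf_le_iff.mp (hg 1)) m hm
  have h2 := (degreeOf_le_iff.mp (hg 2)) m hm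
  simp only [Matrix.cons_val_zero, Matrix.cons_val_one, Matrix.head_cons,
    Matrix.cons_val_two, Matrix.tail_cons] at h0 h1 h2
  simp only [eval_mul, eval_pow, eval_add, eval_sub, eval_X, eval_C,
    Matrix.cons_val_zero, Matrix.cons_val_one, Matrix.head_cons, Matrix.cons_val_two,
    Matrix.tail_cons]
  rw [Fin.prod_univ_three]
  simp only [Matrix.cons_val_zero, Matrix.cons_val_one, Matrix.head_cons,
    Matrix.cons_val_two, Matrix.tail_cons]
  calc ((coeff m g : ℝ) : ℂ) * (Complex.I^(m 0) / (2*Complex.I)^N₁)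
      * (Complex.I^(m 1) / (2*Complex.I)^N₂) * (Complex.I^(m 2) / (2*Complex.I)^N₃) *
      (((w₁ + 1)^(m 0) * (w₁ - 1)^(N₁ - m 0)) *
      (((w₂ + 1)^(m 1) * (w₂ - 1)^(N₂ - m 1)) *
      ((w₃ + 1)^(m 2) * (w₃ - 1)^(N₃ - m 2)))) *
      (((x:ℂ)-I)^N₁ * ((y:ℂ)-I)^N₂ * ((z:ℂ)-I)^N₃)
      = ((coeff m g : ℝ) : ℂ) *
        ((Complex.I^(m 0) / (2*Complex.I)^N₁) * ((w₁ + 1)^(m 0) * (w₁ - 1)^(N₁ - m 0)) * ((x:ℂ)-I)^N₁) *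
        ((Complex.I^(m 1) / (2*Complex.I)^N₂) * ((w₂ + 1)^(m 1) * (w₂ - 1)^(N₂ - m 1)) * ((y:ℂ)-I)^N₂) *
        ((Complex.I^(m 2) / (2*Complex.I)^N₃) * ((w₃ + 1)^(m 2) * (w₃ - 1)^(N₃ - m 2)) * ((z:ℂ)-I)^N₃) := by
          ring
    _ = ((coeff m g : ℝ) : ℂ) * ((x:ℂ)^(m 0) * ((y:ℂ)^(m 1) * (z:ℂ)^(m 2))) := by
          rw [keyC h0 hw1 x hx, keyC h1 hw2 y hy, keyC h2 hw3 z hz]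
          ring
    _ = ((coeff m g : ℝ) : ℂ) * ((x:ℂ)^(m 0) * (y:ℂ)^(m 1) * (z:ℂ)^(m 2)) := by ring

lemma forward_key (N₁ N₂ N₃ : ℕ) (r : ℕ) (q : ℤ×ℤ×ℤ → ℂ) (qc : Fin r → (ℤ×ℤ×ℤ) → ℂ)
    (hQf : ∀ v : ℝ×ℝ×ℝ, ∑ δ ∈ Dbox N₁ N₂ N₃, q δ * eChar δ v
      = ∑ j, (‖∑ δ ∈ Sbox N₁ N₂ N₃, qc j δ * eChar δ v‖ : ℂ)^2)
    (x y z : ℝ) :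
    ∑ δ ∈ Dbox N₁ N₂ N₃, q δ * calderonTerm N₁ N₂ N₃ δ x y z
      = ((∑ j, Complex.normSq (eval (fun i => ((![x,y,z] i : ℝ):ℂ)) (Gp N₁ N₂ N₃ (qc j))) : ℝ) : ℂ) := by
  obtain ⟨α, hα⟩ := exists_w x
  obtain ⟨β, hβ⟩ := exists_w y
  obtain ⟨γ, hγ⟩ := exists_w z
  set P : ℂ := ((x^2+1:ℝ):ℂ)^N₁ * ((y^2+1:ℝ):ℂ)^N₂ * ((z^2+1:ℝ):ℂ)^N₃ with hP
  have hstep1 : ∑ δ ∈ Dbox N₁ N₂ N₃, q δ * calderonTerm N₁ N₂ N₃ δ x y z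
      = P * ∑ δ ∈ Dbox N₁ N₂ N₃, q δ * eChar δ (α, β, γ) := by
    rw [Finset.mul_sum]
    refine Finset.sum_congr rfl fun δ hδ => ?_
    rw [calderonTerm_eq hδ x y z hα hβ hγ, eChar_eq]
    ring
  rw [hstep1, hQf (α, β, γ), Finset.mul_sum]
  push_cast
  refine Finset.sum_congr rfl fun j _ => ?_
  have hGeval := eval_Gp N₁ N₂ N₃ (qc j) x y z α β γ hα hβ hγ
  rw [hGeval]
  simp only [map_mul, map_pow]
  rw [normSq_xmI x, normSq_xmI y, normSq_xmI z, Complex.normSq_eq_norm_sq]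
  push_cast
  ring_nf
  push_cast
  rw [hP]; push_cast; ring

lemma converse_key (N₁ N₂ N₃ : ℕ) (r : ℕ) (q : ℤ×ℤ×ℤ → ℂ)
    (g : Fin r → MvPolynomial (Fin 3) ℝ)
    (hg : ∀ j, ∀ n : Fin 3, degreeOf n (g j) ≤ ![N₁,N₂,N₃] n)
    (p : MvPolynomial (Fin 3) ℝ) (hps : p = ∑ j, (g j)^2)
    (hp : ∀ x y z : ℝ, ((eval ![x,y,z] p : ℝ):ℂ)
      = ∑ δ ∈ Dbox N₁ N₂ N₃, q δ * calderonTerm N₁ N₂ N₃ δ x y z)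
    (v : ℝ×ℝ×ℝ) (h1 : Complex.exp (I*(v.1:ℂ)) ≠ 1) (h2 : Complex.exp (I*(v.2.1:ℂ)) ≠ 1)
    (h3 : Complex.exp (I*(v.2.2:ℂ)) ≠ 1) :
    ∑ δ ∈ Dbox N₁ N₂ N₃, q δ * eChar δ v
      = ∑ j, (‖eval ![Complex.exp (I*(v.1:ℂ)), Complex.exp (I*(v.2.1:ℂ)),
          Complex.exp (I*(v.2.2:ℂ))] (Hp N₁ N₂ N₃ (g j))‖ : ℂ)^2 := by
  have habs1 : ‖Complex.exp (I*(v.1:ℂ))‖ = 1 := by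
    rw [mul_comm]; exact Complex.norm_exp_ofReal_mul_I _
  have habs2 : ‖Complex.exp (I*(v.2.1:ℂ))‖ = 1 := by
    rw [mul_comm]; exact Complex.norm_exp_ofReal_mul_I _
  have habs3 : ‖Complex.exp (I*(v.2.2:ℂ))‖ = 1 := by
    rw [mul_comm]; exact Complex.norm_exp_ofReal_mul_I _
  obtain ⟨x, hx⟩ := exists_x habs1 h1
  obtain ⟨y, hy⟩ := exists_x habs2 h2
  obtain ⟨z, hz⟩ := exists_x habs3 h3
  have hn1 : Complex.exp (I*(v.1:ℂ)) - 1 ≠ 0 := sub_ne_zero.2 h1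
  have hn2 : Complex.exp (I*(v.2.1:ℂ)) - 1 ≠ 0 := sub_ne_zero.2 h2
  have hn3 : Complex.exp (I*(v.2.2:ℂ)) - 1 ≠ 0 := sub_ne_zero.2 h3
  have hα := hw_of_hx hn1 hx
  have hβ := hw_of_hx hn2 hy
  have hγ := hw_of_hx hn3 hz
  have hPx : ((x^2+1:ℝ):ℂ) ≠ 0 := by
    exact_mod_cast (by positivity : (x^2+1:ℝ) ≠ 0)
  have hPy : ((y^2+1:ℝ):ℂ) ≠ 0 := by
    exact_mod_cast (by positivity : (y^2+1:ℝ) ≠ 0)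
  have hPz : ((z^2+1:ℝ):ℂ) ≠ 0 := by
    exact_mod_cast (by positivity : (z^2+1:ℝ) ≠ 0)
  set P : ℂ := ((x^2+1:ℝ):ℂ)^N₁ * ((y^2+1:ℝ):ℂ)^N₂ * ((z^2+1:ℝ):ℂ)^N₃ with hPdef
  have hPne : P ≠ 0 :=
    mul_ne_zero (mul_ne_zero (pow_ne_zero _ hPx) (pow_ne_zero _ hPy)) (pow_ne_zero _ hPz)
  apply mul_left_cancel₀ hPne
  calc P * ∑ δ ∈ Dbox N₁ N₂ N₃, q δ * eChar δ v
      = ∑ δ ∈ Dbox N₁ N₂ N₃, q δ * calderonTerm N₁ N₂ N₃ δ x y z := by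
        rw [Finset.mul_sum]
        refine Finset.sum_congr rfl fun δ hδ => ?_
        rw [calderonTerm_eq hδ x y z hα hβ hγ, eChar_eq]
        ring
    _ = ((eval ![x,y,z] p : ℝ):ℂ) := (hp x y z).symm
    _ = ∑ j, ((eval ![x,y,z] (g j) : ℝ):ℂ)^2 := by
        rw [hps, map_sum]
        push_cast [map_pow]
        rfl
    _ = P * ∑ j, (‖eval ![Complex.exp (I*(v.1:ℂ)), Complex.exp (I*(v.2.1:ℂ)),
          Complex.exp (I*(v.2.2:ℂ))] (Hp N₁ N₂ N₃ (g j))‖ : ℂ)^2 := by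
        rw [Finset.mul_sum]
        refine Finset.sum_congr rfl fun j _ => ?_
        have hH := eval_Hp N₁ N₂ N₃ (g j) (hg j) hn1 hn2 hn3 x y z hx hy hz
        set E := eval ![Complex.exp (I*(v.1:ℂ)), Complex.exp (I*(v.2.1:ℂ)),
          Complex.exp (I*(v.2.2:ℂ))] (Hp N₁ N₂ N₃ (g j)) with hEdef
        have hns : Complex.normSq (((eval ![x,y,z] (g j) : ℝ)):ℂ)
            = Complex.normSq E * ((x^2+1)^N₁*((y^2+1)^N₂*(z^2+1)^N₃)) := by
          rw [← hH]
          simp only [map_mul, map_pow]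
          rw [normSq_xmI x, normSq_xmI y, normSq_xmI z]
          ring
        have hsq : ((eval ![x,y,z] (g j) : ℝ))^2
            = Complex.normSq (((eval ![x,y,z] (g j) : ℝ)):ℂ) := by
          rw [Complex.normSq_ofReal]; ring
        calc ((eval ![x,y,z] (g j) : ℝ):ℂ)^2
            = (((eval ![x,y,z] (g j) : ℝ))^2 : ℝ) := by push_cast; ring
          _ = ((Complex.normSq E * ((x^2+1)^N₁*((y^2+1)^N₂*(z^2+1)^N₃)) : ℝ) : ℂ) := by
              rw [hsq, hns]
          _ = P * (‖E‖ : ℂ)^2 := by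
              rw [Complex.normSq_eq_norm_sq]
              push_cast
              ring_nf
              push_cast
              rw [hPdef]; push_cast; ring

end CalderonAux


/-- Half of Proposition 5: for `f ∈ σ(N₁,N₂,N₃)` with Calderon transform `p`, one has
`f ∈ Q(N₁,N₂,N₃)` iff `p ∈ Q_P(2N₁,2N₂,2N₃)`. -/
theorem calderon_Q_iff_QP (N₁ N₂ N₃ : ℕ) (q : ℤ × ℤ × ℤ → ℂ)
    (f : ℝ × ℝ × ℝ → ℂ) (hf : f = fun v => ∑ δ ∈ Dbox N₁ N₂ N₃, q δ * eChar δ v)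
    (hσ : f ∈ sigmaSet N₁ N₂ N₃)
    (p : MvPolynomial (Fin 3) ℝ)
    (hp : ∀ x y z : ℝ,
      ((eval ![x, y, z] p : ℝ) : ℂ) = ∑ δ ∈ Dbox N₁ N₂ N₃, q δ * calderonTerm N₁ N₂ N₃ δ x y z) :
    f ∈ QSet N₁ N₂ N₃ ↔ p ∈ QPSet N₁ N₂ N₃ := by
  clear hσ
  constructor
  · rintro ⟨r, qc, hfeq⟩
    have hQf : ∀ v : ℝ×ℝ×ℝ, ∑ δ ∈ Dbox N₁ N₂ N₃, q δ * eChar δ v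
        = ∑ j, (‖∑ δ ∈ Sbox N₁ N₂ N₃, qc j δ * eChar δ v‖ : ℂ)^2 := by
      intro v
      calc ∑ δ ∈ Dbox N₁ N₂ N₃, q δ * eChar δ v = f v := (congrFun hf v).symm
        _ = _ := congrFun hfeq v
    refine ⟨r + r, Fin.addCases (fun j => CalderonAux.reP (CalderonAux.Gp N₁ N₂ N₃ (qc j)))
      (fun j => CalderonAux.imP (CalderonAux.Gp N₁ N₂ N₃ (qc j))), ?_, ?_⟩
    · intro j
      have hb : ∀ (P : MvPolynomial (Fin 3) ℝ),
          (∀ n : Fin 3, degreeOf n P ≤ ![N₁,N₂,N₃] n) →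
          degreeOf 0 P ≤ N₁ ∧ degreeOf 1 P ≤ N₂ ∧ degreeOf 2 P ≤ N₃ := by
        intro P h
        exact ⟨by simpa using h 0, by simpa using h 1, by simpa using h 2⟩
      refine Fin.addCases ?_ ?_ j
      · intro j
        simp only [Fin.addCases_left]
        exact hb _ (fun n => le_trans (CalderonAux.degreeOf_reP_le n _)
          (CalderonAux.degreeOf_Gp N₁ N₂ N₃ (qc j) n))
      · intro j
        simp only [Fin.addCases_right]
        exact hb _ (fun n => le_trans (CalderonAux.degreeOf_imP_le n _)
          (CalderonAux.degreeOf_Gp N₁ N₂ N₃ (qc j) n))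
    · apply MvPolynomial.funext
      intro xv
      have hxv : xv = ![xv 0, xv 1, xv 2] := by
        funext i; fin_cases i <;> rfl
      have key := CalderonAux.forward_key N₁ N₂ N₃ r q qc hQf (xv 0) (xv 1) (xv 2)
      rw [← hp (xv 0) (xv 1) (xv 2)] at key
      have key2 : eval ![xv 0, xv 1, xv 2] p
          = ∑ j, Complex.normSq (eval (fun i => ((![xv 0, xv 1, xv 2] i : ℝ):ℂ))
              (CalderonAux.Gp N₁ N₂ N₃ (qc j))) := by
        exact_mod_cast key
      rw [map_sum, Fin.sum_univ_add]
      simp only [Fin.addCases_left, Fin.addCases_right, map_pow]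
      rw [hxv, key2, ← Finset.sum_add_distrib]
      refine Finset.sum_congr rfl fun j _ => ?_
      rw [CalderonAux.eval_reP, CalderonAux.eval_imP, Complex.normSq_apply]
      ring
  · rintro ⟨r, g, hdeg, hps⟩
    have hg : ∀ j, ∀ n : Fin 3, degreeOf n (g j) ≤ ![N₁,N₂,N₃] n := by
      intro j n
      fin_cases n
      · simpa using (hdeg j).1
      · simpa using (hdeg j).2.1
      · simpa using (hdeg j).2.2
    have hHdeg : ∀ j, ∀ n : Fin 3, degreeOf n (CalderonAux.Hp N₁ N₂ N₃ (g j)) ≤ ![N₁,N₂,N₃] n :=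
      fun j => CalderonAux.degreeOf_Hp N₁ N₂ N₃ (g j) (hg j)
    refine ⟨r, fun j δ => coeff (CalderonAux.toMono δ) (CalderonAux.Hp N₁ N₂ N₃ (g j)), ?_⟩
    apply Continuous.ext_on CalderonAux.dense_good
    · rw [hf]
      exact CalderonAux.continuous_trig q _
    · refine continuous_finset_sum _ fun j _ => ?_
      refine Continuous.pow ?_ 2
      exact Complex.continuous_ofReal.comp (CalderonAux.continuous_trig _ _).norm
    · intro v hv
      obtain ⟨h1, h2, h3⟩ := hv
      have hk := CalderonAux.converse_key N₁ N₂ N₃ r q g hg p hps hp v h1 h2 h3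
      have hsc : ∀ j : Fin r, ∑ δ ∈ Sbox N₁ N₂ N₃,
          coeff (CalderonAux.toMono δ) (CalderonAux.Hp N₁ N₂ N₃ (g j)) * eChar δ v
          = eval ![Complex.exp (I*(v.1:ℂ)), Complex.exp (I*(v.2.1:ℂ)),
              Complex.exp (I*(v.2.2:ℂ))] (CalderonAux.Hp N₁ N₂ N₃ (g j)) :=
        fun j => CalderonAux.sum_coeff_eChar N₁ N₂ N₃ _ (hHdeg j) v
      show f v = ∑ j, (‖∑ δ ∈ Sbox N₁ N₂ N₃,
          coeff (CalderonAux.toMono δ) (CalderonAux.Hp N₁ N₂ N₃ (g j)) * eChar δ v‖ : ℂ)^2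
      calc f v = ∑ δ ∈ Dbox N₁ N₂ N₃, q δ * eChar δ v := congrFun hf v
        _ = _ := by
            rw [hk]
            exact Finset.sum_congr rfl fun j _ => by rw [hsc j]
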